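/- Let q ≥ 2 be a prime power. Then lim_{m→∞} binom(2m+1, m)_q / S(2m+1) = 1 / ( q^{1/4} · θ₂(q^{−1}) ). -/

import Mathlib

open Filter Matrix
open scoped Topology

/-- The `q`-binomial coefficient `binom(n,k)_q = ∏_{j=0}^{k-1} (q^{n-j}-1)/(q^{k-j}-1)`. -/
noncomputable def qBinom (q n k : ℕ) : ℝ :=
  ∏ j ∈ Finset.range k, ((q : ℝ) ^ (n - j) - 1) / ((q : ℝ) ^ (k - j) - 1)

/-- `S(n) = ∑_{k=0}^n binom(n,k)_q`. -/
noncomputable def Sq (q n : ℕ) : ℝ := ∑ k ∈ Finset.range (n + 1), qBinom q n k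

/-- `K_q = ∏_{j=1}^∞ (1 - q^{-j})`. -/
noncomputable def Kq (q : ℕ) : ℝ := ∏' j : ℕ, (1 - ((q : ℝ))⁻¹ ^ (j + 1))

/-- `K_q(k) = ∏_{j=1}^{k} (1 - q^{-j})`. -/
noncomputable def KqTrunc (q k : ℕ) : ℝ := ∏ j ∈ Finset.range k, (1 - ((q : ℝ))⁻¹ ^ (j + 1))

/-- Jacobi theta constant `θ₂(w) = ∑_{k∈ℤ} w^{(k+1/2)²}`. -/
noncomputable def theta2 (w : ℝ) : ℝ := ∑' k : ℤ, w ^ (((k : ℝ) + 1/2) ^ 2)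

/-- Jacobi theta constant `θ₃(w) = ∑_{k∈ℤ} w^{k²}`. -/
noncomputable def theta3 (w : ℝ) : ℝ := ∑' k : ℤ, w ^ ((k : ℝ) ^ 2)

/-- Condition (⋆): `n²/4 − ε·n + A·√n − k(n)(n−k(n)) → −∞`. -/
def StarCond (A ε : ℝ) (k : ℕ → ℕ) : Prop :=
  Tendsto (fun n : ℕ =>
    (n : ℝ) ^ 2 / 4 - ε * n + A * Real.sqrt n - (k n : ℝ) * ((n : ℝ) - (k n : ℝ)))
    atTop atBot

/-- The set of permutation matrices inside `GL n F`. -/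
def permSet (F : Type) [Field F] (n : ℕ) : Set (GL (Fin n) F) :=
  {M | ∃ σ : Equiv.Perm (Fin n), (M : Matrix (Fin n) (Fin n) F) = σ.permMatrix F}

/-- The set of invertible diagonal matrices inside `GL n F`. -/
def diagSet (F : Type) [Field F] (n : ℕ) : Set (GL (Fin n) F) :=
  {M | ∃ d : Fin n → F, (M : Matrix (Fin n) (Fin n) F) = Matrix.diagonal d}

/-- The permutation group: subgroup of `GL n F` formed by the permutation matrices. -/
def PermGroup (F : Type) [Field F] (n : ℕ) : Subgroup (GL (Fin n) F) :=
  Subgroup.closure (permSet F n)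

/-- The monomial group: subgroup of `GL n F` generated by permutation and diagonal matrices. -/
def MonomialGroup (F : Type) [Field F] (n : ℕ) : Subgroup (GL (Fin n) F) :=
  Subgroup.closure (permSet F n ∪ diagSet F n)

/-- Number of orbits of a subgroup `G ≤ GL n F` acting on the Grassmannian of
`k`-dimensional subspaces of `F^n` (by taking images of subspaces). -/
noncomputable def numClassesDim {n : ℕ} (F : Type) [Field F]
    (G : Subgroup (GL (Fin n) F)) (k : ℕ) : ℕ :=
  Nat.card (Quot (fun V W : {V : Submodule F (Fin n → F) // Module.finrank F V = k} =>
    ∃ M ∈ G, Submodule.map (Matrix.toLin' (M : Matrix (Fin n) (Fin n) F)) V.1 = W.1))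

/-- Number of orbits of a subgroup `G ≤ GL n F` acting on the set of all subspaces of `F^n`. -/
noncomputable def numClasses {n : ℕ} (F : Type) [Field F]
    (G : Subgroup (GL (Fin n) F)) : ℕ :=
  Nat.card (Quot (fun V W : Submodule F (Fin n → F) =>
    ∃ M ∈ G, Submodule.map (Matrix.toLin' (M : Matrix (Fin n) (Fin n) F)) V = W))

/-- Semilinear orbit relation: `W` is the image of `V` under the semilinear transformation
given by applying the field automorphism `σ` componentwise followed by a monomial matrix. -/
def semiRel (F : Type) [Field F] (n : ℕ) (V W : Submodule F (Fin n → F)) : Prop :=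
  ∃ σ : F ≃+* F, ∃ M ∈ MonomialGroup F n,
    (W : Set (Fin n → F)) =
      (fun x => Matrix.mulVec (M : Matrix (Fin n) (Fin n) F) (fun i => σ (x i))) '' (V : Set (Fin n → F))

/-- Number of semilinear equivalence classes of `k`-dimensional subspaces of `F^n`. -/
noncomputable def numClassesDimSemi (F : Type) [Field F] (n k : ℕ) : ℕ :=
  Nat.card (Quot (fun V W : {V : Submodule F (Fin n → F) // Module.finrank F V = k} =>
    semiRel F n V.1 W.1))

/-- Number of semilinear equivalence classes of subspaces of `F^n`. -/
noncomputable def numClassesSemi (F : Type) [Field F] (n : ℕ) : ℕ :=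
  Nat.card (Quot (fun V W : Submodule F (Fin n → F) => semiRel F n V W))

set_option linter.unusedSectionVars false

noncomputable def Gq (q : ℕ) (s : ℤ) : ℝ := ((q : ℝ))⁻¹ ^ (s ^ 2 - s)

noncomputable def Fm (q m : ℕ) (s : ℤ) : ℝ :=
  if s ∈ Finset.Icc (-(m:ℤ)) ((m:ℤ)+1) then
    qBinom q (2*m+1) (s + m).toNat / qBinom q (2*m+1) m else 0

section Aux

variable {q : ℕ} (hq : 2 ≤ q)
include hq

lemma hq1 : (1 : ℝ) < (q : ℝ) := by exact_mod_cast Nat.lt_of_lt_of_le one_lt_two hq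
lemma hq0 : (0 : ℝ) < (q : ℝ) := lt_trans one_pos (hq1 hq)
lemma hr0 : (0 : ℝ) < ((q : ℝ))⁻¹ := inv_pos.mpr (hq0 hq)
lemma hr1 : ((q : ℝ))⁻¹ < 1 := by
  rw [inv_lt_one_iff₀]; right; exact hq1 hq
lemma hrhalf : ((q : ℝ))⁻¹ ≤ 1/2 := by
  rw [inv_le_comm₀ (hq0 hq) (by norm_num)]
  norm_num
  exact_mod_cast hq

omit hq in
lemma abs_log_one_sub_le {x : ℝ} (h0 : 0 ≤ x) (h2 : x ≤ 1/2) :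
    |Real.log (1 - x)| ≤ 2 * x := by
  have h1 : (0:ℝ) < 1 - x := by linarith
  have hexp : Real.exp (-(2*x)) ≤ 1 - x := by
    rw [Real.exp_neg]
    rw [inv_le_iff_one_le_mul₀ (Real.exp_pos _)]
    nlinarith [Real.add_one_le_exp (2*x), Real.exp_pos (2*x)]
  have hlog : -(2*x) ≤ Real.log (1 - x) := by
    rw [← Real.le_log_iff_exp_le h1] at hexp
    exact hexp
  rw [abs_of_nonpos (Real.log_nonpos (by linarith) (by linarith))]
  linarith

lemma factor_pos (j : ℕ) : (0:ℝ) < 1 - ((q : ℝ))⁻¹ ^ (j + 1) := by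
  have h : ((q : ℝ))⁻¹ ^ (j+1) ≤ ((q : ℝ))⁻¹ ^ 1 :=
    pow_le_pow_of_le_one (hr0 hq).le (hr1 hq).le (by omega)
  have := hr1 hq
  simp only [pow_one] at h
  linarith

lemma log_summable : Summable (fun j : ℕ => Real.log (1 - ((q : ℝ))⁻¹ ^ (j + 1))) := by
  apply Summable.of_norm_bounded (g := fun j : ℕ => (2 * (q:ℝ)⁻¹) * ((q:ℝ)⁻¹) ^ j)
  · exact (summable_geometric_of_lt_one (hr0 hq).le (hr1 hq)).mul_left _
  · intro j
    have h0 : (0:ℝ) ≤ ((q : ℝ))⁻¹ ^ (j+1) := pow_nonneg (hr0 hq).le _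
    have h2 : ((q : ℝ))⁻¹ ^ (j+1) ≤ 1/2 := by
      calc ((q : ℝ))⁻¹ ^ (j+1) ≤ ((q : ℝ))⁻¹ ^ 1 :=
            pow_le_pow_of_le_one (hr0 hq).le (hr1 hq).le (by omega)
        _ ≤ 1/2 := by simpa using hrhalf hq
    have := abs_log_one_sub_le h0 h2
    calc ‖Real.log (1 - ((q : ℝ))⁻¹ ^ (j+1))‖ ≤ 2 * ((q : ℝ))⁻¹ ^ (j+1) := this
      _ = 2 * (q:ℝ)⁻¹ * ((q:ℝ)⁻¹) ^ j := by ring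

lemma hasProd_Kq : HasProd (fun j : ℕ => 1 - ((q : ℝ))⁻¹ ^ (j + 1)) (Kq q) := by
  have := (Real.multipliable_of_summable_log (fun j => factor_pos hq j) (log_summable hq)).hasProd
  exact this

lemma tendsto_KqTrunc : Tendsto (KqTrunc q) atTop (𝓝 (Kq q)) :=
  (hasProd_Kq hq).tendsto_prod_nat

lemma Kq_pos : 0 < Kq q := by
  have h := Real.rexp_tsum_eq_tprod (fun j => factor_pos hq j) (log_summable hq)
  rw [Kq, ← h]
  exact Real.exp_pos _

lemma KqTrunc_pos (k : ℕ) : 0 < KqTrunc q k :=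
  Finset.prod_pos (fun j _ => factor_pos hq j)

lemma KqTrunc_le_one (k : ℕ) : KqTrunc q k ≤ 1 :=
  Finset.prod_le_one (fun j _ => (factor_pos hq j).le)
    (fun j _ => by nlinarith [pow_nonneg (hr0 hq).le (j+1)])

lemma KqTrunc_antitone : Antitone (KqTrunc q) := by
  apply antitone_nat_of_succ_le
  intro k
  rw [KqTrunc, Finset.prod_range_succ]
  have h1 := KqTrunc_pos hq k
  have h2 : 1 - ((q : ℝ))⁻¹ ^ (k + 1) ≤ 1 := by nlinarith [pow_nonneg (hr0 hq).le (k+1)]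
  calc KqTrunc q k * (1 - ((q : ℝ))⁻¹ ^ (k + 1)) ≤ KqTrunc q k * 1 := by
        apply mul_le_mul_of_nonneg_left h2 h1.le
    _ = KqTrunc q k := mul_one _
lemma Kq_le_KqTrunc (k : ℕ) : Kq q ≤ KqTrunc q k := by
  apply le_of_tendsto (tendsto_KqTrunc hq)
  filter_upwards [eventually_ge_atTop k] with l hl
  exact KqTrunc_antitone hq hl

lemma qBinom_formula (k d : ℕ) :
    qBinom q (k + d) k =
      (q : ℝ) ^ (k * d) * KqTrunc q (k + d) / (KqTrunc q k * KqTrunc q d) := by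
  have hq0 : (0:ℝ) < (q:ℝ) := hq0 hq
  have hpow : ∀ i : ℕ, (q : ℝ) ^ i - 1 = (q : ℝ) ^ i * (1 - ((q : ℝ))⁻¹ ^ (i)) := by
    intro i
    rw [inv_pow]
    field_simp
  have step : ∀ j ∈ Finset.range k,
      ((q : ℝ) ^ (k + d - j) - 1) / ((q : ℝ) ^ (k - j) - 1)
        = (q : ℝ) ^ d * ((1 - ((q:ℝ))⁻¹ ^ (k + d - j)) / (1 - ((q:ℝ))⁻¹ ^ (k - j))) := by
    intro j hj
    rw [Finset.mem_range] at hj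
    have h1 : (q : ℝ) ^ (k + d - j) = (q : ℝ) ^ d * (q : ℝ) ^ (k - j) := by
      rw [← pow_add]; congr 1; omega
    rw [hpow, hpow, h1]
    have hkj : (0:ℝ) < (q : ℝ) ^ (k - j) := pow_pos hq0 _
    field_simp
  rw [qBinom, Finset.prod_congr rfl step, Finset.prod_mul_distrib, Finset.prod_const,
    Finset.prod_div_distrib]
  have hA : (∏ j ∈ Finset.range k, (1 - ((q:ℝ))⁻¹ ^ (k - j))) = KqTrunc q k := by
    rw [KqTrunc, ← Finset.prod_range_reflect (fun j => 1 - ((q:ℝ))⁻¹ ^ (j + 1)) k]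
    apply Finset.prod_congr rfl
    intro j hj
    rw [Finset.mem_range] at hj
    have h : k - j = (k - 1 - j) + 1 := by omega
    rw [h]
  have hB : (∏ j ∈ Finset.range k, (1 - ((q:ℝ))⁻¹ ^ (k + d - j)))
      = KqTrunc q (k + d) / KqTrunc q d := by
    have hsplit : KqTrunc q (k + d)
        = KqTrunc q d * ∏ j ∈ Finset.range k, (1 - ((q:ℝ))⁻¹ ^ (d + j + 1)) := by
      rw [show k + d = d + k by omega, KqTrunc, Finset.prod_range_add]
      rfl
    have hrefl : (∏ j ∈ Finset.range k, (1 - ((q:ℝ))⁻¹ ^ (k + d - j)))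
        = ∏ j ∈ Finset.range k, (1 - ((q:ℝ))⁻¹ ^ (d + j + 1)) := by
      rw [← Finset.prod_range_reflect (fun j => 1 - ((q:ℝ))⁻¹ ^ (d + j + 1)) k]
      apply Finset.prod_congr rfl
      intro j hj
      rw [Finset.mem_range] at hj
      have h : k + d - j = d + (k - 1 - j) + 1 := by omega
      rw [h]
    rw [hrefl, hsplit, mul_div_cancel_left₀ _ (KqTrunc_pos hq d).ne']
  rw [hA, hB, Finset.card_range, ← pow_mul, mul_comm d k]
  have h1 := (KqTrunc_pos hq k).ne'
  have h2 := (KqTrunc_pos hq d).ne'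
  field_simp
lemma Gq_pos (s : ℤ) : 0 < Gq q s := zpow_pos (hr0 hq) _

lemma zpow_antitone {a b : ℤ} (h : a ≤ b) : ((q:ℝ))⁻¹ ^ b ≤ ((q:ℝ))⁻¹ ^ a :=
  (zpow_right_strictAnti₀ (hr0 hq) (hr1 hq)).antitone h

lemma Fm_eq (m : ℕ) (s : ℤ) (h1 : -(m:ℤ) ≤ s) (h2 : s ≤ (m:ℤ) + 1) :
    Fm q m s = Gq q s * ((KqTrunc q m * KqTrunc q (m+1)) /
      (KqTrunc q (s + m).toNat * KqTrunc q ((m:ℤ) + 1 - s).toNat)) := by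
  have hmem : s ∈ Finset.Icc (-(m:ℤ)) ((m:ℤ)+1) := Finset.mem_Icc.mpr ⟨h1, h2⟩
  rw [Fm, if_pos hmem]
  set a : ℕ := (s + m).toNat with ha'
  set b : ℕ := ((m:ℤ) + 1 - s).toNat with hb'
  have ha : (a:ℤ) = s + m := by omega
  have hb : (b:ℤ) = (m:ℤ) + 1 - s := by omega
  have hab : a + b = 2*m+1 := by omega
  have hm1 : m + (m+1) = 2*m+1 := by omega
  have e1 : qBinom q (2*m+1) a =
      (q : ℝ) ^ (a * b) * KqTrunc q (2*m+1) / (KqTrunc q a * KqTrunc q b) := by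
    rw [← hab]; exact qBinom_formula hq a b
  have e2 : qBinom q (2*m+1) m =
      (q : ℝ) ^ (m * (m+1)) * KqTrunc q (2*m+1) / (KqTrunc q m * KqTrunc q (m+1)) := by
    rw [← hm1]; exact qBinom_formula hq m (m+1)
  have hGq : Gq q s * (q:ℝ) ^ (m * (m+1)) = (q:ℝ) ^ (a * b) := by
    have hq0' : (q:ℝ) ≠ 0 := (hq0 hq).ne'
    rw [Gq, _root_.inv_zpow, ← _root_.zpow_neg, ← zpow_natCast (q:ℝ) (m*(m+1)), ← zpow_add₀ hq0',
      ← zpow_natCast (q:ℝ) (a*b)]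
    congr 1
    have : ((a*b : ℕ) : ℤ) = (s + m) * ((m:ℤ) + 1 - s) := by
      push_cast [ha, hb]; ring
    rw [this]
    push_cast
    ring
  rw [e1, e2]
  have hX := (KqTrunc_pos hq (2*m+1)).ne'
  have h3 := (KqTrunc_pos hq a).ne'
  have h4 := (KqTrunc_pos hq b).ne'
  have h5 := (KqTrunc_pos hq m).ne'
  have h6 := (KqTrunc_pos hq (m+1)).ne'
  have hP := (pow_pos (hq0 hq) (m*(m+1))).ne'
  have helper : ∀ P Q X A B C D : ℝ, Q ≠ 0 → X ≠ 0 → A ≠ 0 → B ≠ 0 → C ≠ 0 → D ≠ 0 →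
      (P * X / (C * D)) / (Q * X / (A * B)) = (P/Q) * ((A*B)/(C*D)) := by
    intros P Q X A B C D hQ hX hA hB hC hD
    field_simp
  rw [helper _ _ _ _ _ _ _ hP hX h5 h6 h3 h4]
  congr 1
  rw [eq_comm, ← hGq, mul_div_cancel_right₀ _ hP]

lemma Fm_nonneg (m : ℕ) (s : ℤ) : 0 ≤ Fm q m s := by
  by_cases h : s ∈ Finset.Icc (-(m:ℤ)) ((m:ℤ)+1)
  · rw [Finset.mem_Icc] at h
    rw [Fm_eq hq m s h.1 h.2]
    have := Gq_pos hq s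
    have := KqTrunc_pos hq m
    have := KqTrunc_pos hq (m+1)
    have := KqTrunc_pos hq (s + m).toNat
    have := KqTrunc_pos hq ((m:ℤ) + 1 - s).toNat
    positivity
  · rw [Fm, if_neg h]

lemma Fm_bound (m : ℕ) (s : ℤ) : ‖Fm q m s‖ ≤ Gq q s / (Kq q * Kq q) := by
  have hb0 : 0 ≤ Gq q s / (Kq q * Kq q) :=
    div_nonneg (Gq_pos hq s).le (mul_nonneg (Kq_pos hq).le (Kq_pos hq).le)
  rw [Real.norm_eq_abs, abs_of_nonneg (Fm_nonneg hq m s)]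
  by_cases h : s ∈ Finset.Icc (-(m:ℤ)) ((m:ℤ)+1)
  · rw [Finset.mem_Icc] at h
    rw [Fm_eq hq m s h.1 h.2, ← mul_div_assoc]
    apply div_le_div₀ (Gq_pos hq s).le
    · calc Gq q s * (KqTrunc q m * KqTrunc q (m+1)) ≤ Gq q s * (1 * 1) := by
            apply mul_le_mul_of_nonneg_left _ (Gq_pos hq s).le
            exact mul_le_mul (KqTrunc_le_one hq m) (KqTrunc_le_one hq (m+1))
              (KqTrunc_pos hq (m+1)).le zero_le_one
        _ = Gq q s := by ring
    · exact mul_pos (Kq_pos hq) (Kq_pos hq)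
    · exact mul_le_mul (Kq_le_KqTrunc hq _) (Kq_le_KqTrunc hq _) (Kq_pos hq).le
        (KqTrunc_pos hq _).le
  · rw [Fm, if_neg h]
    exact hb0

lemma Gq_summable : Summable (Gq q) := by
  have hle : ∀ s : ℤ, Gq q s ≤ ((q:ℝ))⁻¹ ^ (s.natAbs) / ((q:ℝ))⁻¹ := by
    intro s
    have hexp : (s.natAbs : ℤ) - 1 ≤ s ^ 2 - s := by
      rcases le_or_gt 0 s with hs | hs
      · rw [Int.natAbs_of_nonneg hs]
        nlinarith [sq_nonneg (s - 1)]
      · rw [Int.ofNat_natAbs_of_nonpos hs.le]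
        nlinarith [sq_nonneg s]
    calc Gq q s ≤ ((q:ℝ))⁻¹ ^ ((s.natAbs : ℤ) - 1) := zpow_antitone hq hexp
      _ = ((q:ℝ))⁻¹ ^ (s.natAbs) / ((q:ℝ))⁻¹ := by
          rw [zpow_sub₀ (hr0 hq).ne', zpow_natCast, zpow_one]
  apply Summable.of_nonneg_of_le (fun s => (Gq_pos hq s).le) hle
  apply Summable.div_const
  apply Summable.of_nat_of_neg_add_one
  · exact summable_geometric_of_lt_one (hr0 hq).le (hr1 hq)
  · have : (fun n : ℕ => ((q:ℝ))⁻¹ ^ ((-(n+1) : ℤ).natAbs)) =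
        fun n : ℕ => ((q:ℝ))⁻¹ * ((q:ℝ))⁻¹ ^ n := by
      funext n
      have : ((-(n+1) : ℤ)).natAbs = n + 1 := by omega
      rw [this, pow_succ]
      ring
    rw [this]
    exact (summable_geometric_of_lt_one (hr0 hq).le (hr1 hq)).mul_left _

lemma Fm_tendsto (s : ℤ) : Tendsto (fun m => Fm q m s) atTop (𝓝 (Gq q s)) := by
  have hKne : Kq q ≠ 0 := (Kq_pos hq).ne'
  have haux : ∀ c : ℤ, Tendsto (fun m : ℕ => (c + (m:ℤ)).toNat) atTop atTop := by
    intro c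
    apply tendsto_atTop_atTop.mpr
    intro b
    exact ⟨b + c.natAbs, fun a ha => by omega⟩
  have t1 : Tendsto (fun m : ℕ => KqTrunc q (s + (m:ℤ)).toNat) atTop (𝓝 (Kq q)) :=
    (tendsto_KqTrunc hq).comp (haux s)
  have t2 : Tendsto (fun m : ℕ => KqTrunc q ((m:ℤ) + 1 - s).toNat) atTop (𝓝 (Kq q)) := by
    have : (fun m : ℕ => ((m:ℤ) + 1 - s).toNat) = fun m : ℕ => ((1 - s) + (m:ℤ)).toNat := by
      funext m; congr 1; ring
    rw [show (fun m : ℕ => KqTrunc q ((m:ℤ) + 1 - s).toNat)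
      = (KqTrunc q) ∘ (fun m : ℕ => ((m:ℤ) + 1 - s).toNat) from rfl, this]
    exact (tendsto_KqTrunc hq).comp (haux (1 - s))
  have t3 : Tendsto (fun m : ℕ => KqTrunc q m) atTop (𝓝 (Kq q)) := tendsto_KqTrunc hq
  have t4 : Tendsto (fun m : ℕ => KqTrunc q (m+1)) atTop (𝓝 (Kq q)) :=
    (tendsto_KqTrunc hq).comp (tendsto_add_atTop_nat 1)
  have tall : Tendsto (fun m : ℕ => Gq q s * ((KqTrunc q m * KqTrunc q (m+1)) /
      (KqTrunc q (s + (m:ℤ)).toNat * KqTrunc q ((m:ℤ) + 1 - s).toNat))) atTop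
      (𝓝 (Gq q s * ((Kq q * Kq q) / (Kq q * Kq q)))) :=
    tendsto_const_nhds.mul ((t3.mul t4).div (t1.mul t2)
      (mul_ne_zero hKne hKne))
  have : Gq q s * ((Kq q * Kq q) / (Kq q * Kq q)) = Gq q s := by
    rw [div_self (mul_ne_zero hKne hKne), mul_one]
  rw [this] at tall
  apply Tendsto.congr' _ tall
  filter_upwards [eventually_ge_atTop s.natAbs] with m hm
  rw [Fm_eq hq m s (by omega) (by omega)]


lemma tsum_Fm (m : ℕ) : ∑' s : ℤ, Fm q m s = Sq q (2*m+1) / qBinom q (2*m+1) m := by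
  have hsupp : ∀ s ∉ Finset.Icc (-(m:ℤ)) ((m:ℤ)+1), Fm q m s = 0 := by
    intro s hs; rw [Fm, if_neg hs]
  rw [tsum_eq_sum hsupp, Sq, Finset.sum_div]
  apply Finset.sum_nbij' (i := fun s => (s + (m:ℤ)).toNat) (j := fun k => (k:ℤ) - m)
  · intro s hs
    rw [Finset.mem_Icc] at hs
    rw [Finset.mem_range]
    omega
  · intro k hk
    rw [Finset.mem_range] at hk
    rw [Finset.mem_Icc]
    omega
  · intro s hs
    rw [Finset.mem_Icc] at hs
    omega
  · intro k hk
    rw [Finset.mem_range] at hk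
    omega
  · intro s hs
    rw [Fm, if_pos hs]

lemma theta_eq : (q:ℝ) ^ ((1:ℝ)/4) * theta2 ((q:ℝ))⁻¹ = ∑' s : ℤ, Gq q s := by
  have hr0' := hr0 hq
  have hterm : ∀ k : ℤ, ((q:ℝ))⁻¹ ^ ((((k:ℝ)) + 1/2)^2)
      = ((q:ℝ))⁻¹ ^ ((1:ℝ)/4) * ((q:ℝ))⁻¹ ^ (k^2 + k : ℤ) := by
    intro k
    rw [show (((k:ℝ)) + 1/2)^2 = ((k^2 + k : ℤ) : ℝ) + 1/4 by push_cast; ring]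
    rw [Real.rpow_add hr0', Real.rpow_intCast]
    ring
  rw [theta2]
  calc (q:ℝ) ^ ((1:ℝ)/4) * ∑' k : ℤ, ((q:ℝ))⁻¹ ^ (((k:ℝ) + 1/2)^2)
      = (q:ℝ) ^ ((1:ℝ)/4) * ∑' k : ℤ, (((q:ℝ))⁻¹ ^ ((1:ℝ)/4) * ((q:ℝ))⁻¹ ^ (k^2 + k : ℤ)) := by
        rw [tsum_congr hterm]
    _ = ((q:ℝ) ^ ((1:ℝ)/4) * ((q:ℝ))⁻¹ ^ ((1:ℝ)/4)) * ∑' k : ℤ, ((q:ℝ))⁻¹ ^ (k^2 + k : ℤ) := by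
        rw [tsum_mul_left]; ring
    _ = ∑' k : ℤ, ((q:ℝ))⁻¹ ^ (k^2 + k : ℤ) := by
        rw [← Real.mul_rpow (hq0 hq).le hr0'.le, mul_inv_cancel₀ (hq0 hq).ne',
          Real.one_rpow, one_mul]
    _ = ∑' s : ℤ, Gq q s := by
        rw [← (Equiv.addRight (1:ℤ)).tsum_eq (Gq q)]
        apply tsum_congr
        intro k
        simp only [Equiv.coe_addRight, Gq]
        congr 1
        ring

end Aux

theorem stmt13 (q : ℕ) (hq : IsPrimePow q) :
    Tendsto (fun m : ℕ => qBinom q (2 * m + 1) m / Sq q (2 * m + 1))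
      atTop (𝓝 (1 / ((q : ℝ) ^ ((1 : ℝ) / 4) * theta2 ((q : ℝ))⁻¹))) := by
  have hq2 : 2 ≤ q := hq.two_le
  have hT1 : (1:ℝ) ≤ ∑' s : ℤ, Gq q s := by
    have h := Summable.le_tsum (Gq_summable hq2) 0 (fun i _ => (Gq_pos hq2 i).le)
    simpa [Gq] using h
  have hTpos : (0:ℝ) < ∑' s : ℤ, Gq q s := lt_of_lt_of_le one_pos hT1
  have key : Tendsto (fun m : ℕ => ∑' s : ℤ, Fm q m s) atTop (𝓝 (∑' s : ℤ, Gq q s)) := by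
    apply tendsto_tsum_of_dominated_convergence
      ((Gq_summable hq2).div_const (Kq q * Kq q))
      (fun s => Fm_tendsto hq2 s)
    exact Eventually.of_forall (fun m s => Fm_bound hq2 m s)
  have key' : Tendsto (fun m : ℕ => Sq q (2*m+1) / qBinom q (2*m+1) m) atTop
      (𝓝 (∑' s : ℤ, Gq q s)) := by
    apply key.congr
    intro m
    exact tsum_Fm hq2 m
  have final := key'.inv₀ hTpos.ne'
  have heq : (fun m : ℕ => qBinom q (2 * m + 1) m / Sq q (2 * m + 1))
      = fun m : ℕ => (Sq q (2*m+1) / qBinom q (2*m+1) m)⁻¹ := by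
    funext m
    rw [inv_div]
  rw [heq, one_div, theta_eq hq2]
  exact final
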